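/- Let α be a finite type and V a vector space over ℚ. Let B : (α → ℕ) → V have finite support, and define F : (α → ℕ) → V by F(m) = Σ_M [ Π_{c ∈ α} ((m_c)! / (M_c)!) · S(M_c, m_c) ] • B(M), where the sum ranges over all M : α → ℕ (only finitely many terms are nonzero since B has finite support), the bracketed coefficient is a rational number, and • is scalar multiplication. Then F has finite support and, for every m : α → ℕ, B(m) = Σ_M (−1)^{|M| − |m|} [ Π_{c ∈ α} ((m_c)! / (M_c)!) · c(M_c, m_c) ] • F(M), where |m| = Σ_{c∈α} m_c. -/

import Mathlib

/-- Unsigned Stirling numbers of the first kind, defined by the recurrence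
`c(n,k) = (n-1)·c(n-1,k) + c(n-1,k-1)` for `n,k > 0`, with `c(0,0) = 1`,
`c(0,k) = 0` for `k > 0` and `c(n,0) = 0` for `n > 0`. -/
def stirlingFirst : ℕ → ℕ → ℕ
  | 0, 0 => 1
  | 0, _ + 1 => 0
  | _ + 1, 0 => 0
  | n + 1, k + 1 => n * stirlingFirst n (k + 1) + stirlingFirst n k

/-- Stirling numbers of the second kind, defined by the recurrence
`S(n,k) = k·S(n-1,k) + S(n-1,k-1)` for `n,k > 0`, with `S(0,0) = 1`,
`S(0,k) = 0` for `k > 0` and `S(n,0) = 0` for `n > 0`. -/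
def stirlingSecond : ℕ → ℕ → ℕ
  | 0, 0 => 1
  | 0, _ + 1 => 0
  | _ + 1, 0 => 0
  | n + 1, k + 1 => (k + 1) * stirlingSecond n (k + 1) + stirlingSecond n k

/-- multivariate Stirling inversion (core of Theorem 4.3 of the
paper). If `B` has finite support and
`F m = ∑_M [∏_c (m_c)!/(M_c)! · S(M_c, m_c)] • B M`, then `F` has finite support
and `B m = ∑_M (-1)^{|M|-|m|} [∏_c (m_c)!/(M_c)! · c(M_c, m_c)] • F M`. -/
lemma stirlingSecond_eq_zero_of_lt : ∀ {n k : ℕ}, n < k → stirlingSecond n k = 0 := by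
  intro n
  induction n with
  | zero => intro k hk; match k, hk with | k + 1, _ => rfl
  | succ n ih =>
    intro k hk
    match k, hk with
    | k + 1, hk =>
      show (k + 1) * stirlingSecond n (k + 1) + stirlingSecond n k = 0
      rw [ih (by omega), ih (by omega)]
      simp

lemma stirlingFirst_eq_zero_of_lt : ∀ {n k : ℕ}, n < k → stirlingFirst n k = 0 := by
  intro n
  induction n with
  | zero => intro k hk; match k, hk with | k + 1, _ => rfl
  | succ n ih =>
    intro k hk
    match k, hk with
    | k + 1, hk =>
      show n * stirlingFirst n (k + 1) + stirlingFirst n k = 0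
      rw [ih (by omega), ih (by omega)]
      simp

lemma orth (n m : ℕ) :
    ∑ k ∈ Finset.range (n + 1),
      ((-1 : ℚ)) ^ k * (stirlingFirst k m : ℚ) * (stirlingSecond n k : ℚ) =
      if n = m then (-1 : ℚ) ^ m else 0 := by
  induction n generalizing m with
  | zero =>
    match m with
    | 0 => simp [stirlingFirst, stirlingSecond]
    | m + 1 => simp [stirlingFirst, stirlingSecond, stirlingFirst_eq_zero_of_lt (Nat.succ_pos m)]
  | succ n ih =>
    match m with
    | 0 =>
      rw [if_neg (by omega)]
      apply Finset.sum_eq_zero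
      intro k hk
      match k with
      | 0 => show (-1:ℚ)^0 * _ * (stirlingSecond (n+1) 0 : ℚ) = 0; simp [stirlingSecond]
      | k + 1 =>
        have : stirlingFirst (k+1) 0 = 0 := rfl
        simp [this]
    | m + 1 =>
      have key : ∑ k ∈ Finset.range (n + 2),
          ((-1 : ℚ)) ^ k * (stirlingFirst k (m+1) : ℚ) * (stirlingSecond (n+1) k : ℚ)
          = - ∑ k ∈ Finset.range (n + 1),
          ((-1 : ℚ)) ^ k * (stirlingFirst k m : ℚ) * (stirlingSecond n k : ℚ) := by
        rw [Finset.sum_range_succ']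
        have h0 : (-1:ℚ)^0 * (stirlingFirst 0 (m+1) : ℚ) * (stirlingSecond (n+1) 0 : ℚ) = 0 := by
          simp [stirlingFirst]
        rw [h0, add_zero]
        have hterm : ∀ k, ((-1 : ℚ)) ^ (k+1) * (stirlingFirst (k+1) (m+1) : ℚ) *
            (stirlingSecond (n+1) (k+1) : ℚ)
            = ((-1:ℚ))^(k+1) * ((k:ℚ)+1) * (stirlingFirst (k+1) (m+1) : ℚ) * (stirlingSecond n (k+1) : ℚ)
              + (-((-1:ℚ))^k * (k:ℚ) * (stirlingFirst k (m+1) : ℚ) * (stirlingSecond n k : ℚ))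
              + (-((-1:ℚ))^k * (stirlingFirst k m : ℚ) * (stirlingSecond n k : ℚ)) := by
          intro k
          have h1 : stirlingSecond (n+1) (k+1) = (k + 1) * stirlingSecond n (k + 1) + stirlingSecond n k := rfl
          have h2 : stirlingFirst (k+1) (m+1) = k * stirlingFirst k (m + 1) + stirlingFirst k m := rfl
          rw [h1, h2]
          push_cast
          ring
        rw [Finset.sum_congr rfl fun k _ => hterm k]
        rw [Finset.sum_add_distrib, Finset.sum_add_distrib]
        have hshift : ∑ k ∈ Finset.range (n+1),
            ((-1:ℚ))^(k+1) * ((k:ℚ)+1) * (stirlingFirst (k+1) (m+1) : ℚ) * (stirlingSecond n (k+1) : ℚ)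
            = ∑ k ∈ Finset.range (n+1),
            ((-1:ℚ))^k * (k:ℚ) * (stirlingFirst k (m+1) : ℚ) * (stirlingSecond n k : ℚ) := by
          have e1 : ∑ k ∈ Finset.range (n+2),
              ((-1:ℚ))^k * (k:ℚ) * (stirlingFirst k (m+1) : ℚ) * (stirlingSecond n k : ℚ)
              = ∑ k ∈ Finset.range (n+1),
              ((-1:ℚ))^(k+1) * ((k:ℚ)+1) * (stirlingFirst (k+1) (m+1) : ℚ) * (stirlingSecond n (k+1) : ℚ) := by
            rw [Finset.sum_range_succ']
            push_cast
            simp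
          have e2 : ∑ k ∈ Finset.range (n+2),
              ((-1:ℚ))^k * (k:ℚ) * (stirlingFirst k (m+1) : ℚ) * (stirlingSecond n k : ℚ)
              = ∑ k ∈ Finset.range (n+1),
              ((-1:ℚ))^k * (k:ℚ) * (stirlingFirst k (m+1) : ℚ) * (stirlingSecond n k : ℚ) := by
            rw [Finset.sum_range_succ, stirlingSecond_eq_zero_of_lt (Nat.lt_succ_self n)]
            simp
          rw [← e1, e2]
        rw [hshift]
        simp only [neg_mul, Finset.sum_neg_distrib]
        abel
      rw [key, ih m]
      by_cases h : n = m
      · subst h; simp [pow_succ]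
      · rw [if_neg h, if_neg (by omega), neg_zero]
lemma orth' (n m t : ℕ) (h : n ≤ t) :
    ∑ k ∈ Finset.range (t + 1),
      ((-1 : ℚ)) ^ k * (stirlingFirst k m : ℚ) * (stirlingSecond n k : ℚ) =
      if n = m then (-1 : ℚ) ^ m else 0 := by
  rw [← orth n m]
  refine (Finset.sum_subset ?_ ?_).symm
  · exact Finset.range_subset_range.2 (by omega)
  · intro k _ hk
    rw [Finset.mem_range, Nat.lt_succ_iff, not_le] at hk
    rw [stirlingSecond_eq_zero_of_lt hk]
    simp

lemma neg_one_zpow_sub (a b : ℕ) : (-1 : ℚ) ^ ((a : ℤ) - (b : ℤ)) = (-1 : ℚ) ^ a * (-1 : ℚ) ^ b := by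
  rw [zpow_sub₀ (by norm_num : (-1 : ℚ) ≠ 0), zpow_natCast, zpow_natCast, div_eq_mul_inv]
  congr 1
  rcases Nat.even_or_odd b with h | h
  · rw [h.neg_one_pow]; norm_num
  · rw [h.neg_one_pow]; norm_num

lemma coordSum (mc Nc t : ℕ) (h : Nc ≤ t) :
    ∑ k ∈ Finset.range (t + 1),
      ((-1 : ℚ) ^ k * (-1 : ℚ) ^ mc *
        ((mc.factorial : ℚ) / (k.factorial : ℚ) * (stirlingFirst k mc : ℚ))) *
        ((k.factorial : ℚ) / (Nc.factorial : ℚ) * (stirlingSecond Nc k : ℚ)) =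
      if Nc = mc then 1 else 0 := by
  have hterm : ∀ k : ℕ,
      ((-1 : ℚ) ^ k * (-1 : ℚ) ^ mc *
        ((mc.factorial : ℚ) / (k.factorial : ℚ) * (stirlingFirst k mc : ℚ))) *
        ((k.factorial : ℚ) / (Nc.factorial : ℚ) * (stirlingSecond Nc k : ℚ))
      = ((-1 : ℚ) ^ mc * ((mc.factorial : ℚ) / (Nc.factorial : ℚ))) *
          ((-1 : ℚ) ^ k * (stirlingFirst k mc : ℚ) * (stirlingSecond Nc k : ℚ)) := by
    intro k
    have hk : (k.factorial : ℚ) ≠ 0 := Nat.cast_ne_zero.2 k.factorial_ne_zero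
    have hN : (Nc.factorial : ℚ) ≠ 0 := Nat.cast_ne_zero.2 Nc.factorial_ne_zero
    field_simp
  rw [Finset.sum_congr rfl fun k _ => hterm k, ← Finset.mul_sum, orth' Nc mc t h]
  by_cases he : Nc = mc
  · subst he
    rw [if_pos rfl, if_pos rfl, div_self (Nat.cast_ne_zero.2 Nc.factorial_ne_zero), mul_one,
      ← pow_add]
    exact Even.neg_one_pow ⟨Nc, rfl⟩
  · simp [he]

theorem stmt_16 {α V : Type*} [Fintype α] [AddCommGroup V] [Module ℚ V]
    (B F : (α → ℕ) → V) (hB : (Function.support B).Finite)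
    (hF : ∀ m : α → ℕ, F m =
      ∑ᶠ M : α → ℕ,
        (∏ c : α, ((m c).factorial : ℚ) / ((M c).factorial : ℚ) *
          (stirlingSecond (M c) (m c) : ℚ)) • B M) :
    (Function.support F).Finite ∧
      ∀ m : α → ℕ, B m =
        ∑ᶠ M : α → ℕ,
          ((-1 : ℚ) ^ ((∑ c : α, (M c : ℤ)) - ∑ c : α, (m c : ℤ)) *
            ∏ c : α, ((m c).factorial : ℚ) / ((M c).factorial : ℚ) *
              (stirlingFirst (M c) (m c) : ℚ)) • F M := by
  classical
  set b : α → ℕ := fun c => hB.toFinset.sup fun M => M c with hb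
  set Box : Finset (α → ℕ) := Fintype.piFinset fun c => Finset.range (b c + 1) with hBoxdef
  have hmemBox : ∀ {M : α → ℕ}, B M ≠ 0 → M ∈ Box := by
    intro M hM
    rw [hBoxdef, Fintype.mem_piFinset]
    intro c
    rw [Finset.mem_range, Nat.lt_succ_iff]
    exact Finset.le_sup (f := fun M => M c) (hB.mem_toFinset.2 hM)
  have hBoxle : ∀ {M : α → ℕ}, M ∈ Box → ∀ c, M c ≤ b c := by
    intro M hM c
    have := Fintype.mem_piFinset.1 hM c
    rw [Finset.mem_range, Nat.lt_succ_iff] at this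
    exact this
  set A : (α → ℕ) → (α → ℕ) → ℚ := fun m M =>
    ∏ c, ((m c).factorial : ℚ) / ((M c).factorial : ℚ) * (stirlingSecond (M c) (m c) : ℚ)
    with hAdef
  have hF' : ∀ m, F m = ∑ M ∈ Box, A m M • B M := by
    intro m
    rw [hF m]
    refine finsum_eq_sum_of_support_subset _ ?_
    intro M hM
    rw [Function.mem_support] at hM
    have : B M ≠ 0 := fun h0 => hM (by rw [h0, smul_zero])
    exact hmemBox this
  have hAne : ∀ {m M : α → ℕ}, A m M ≠ 0 → ∀ c, m c ≤ M c := by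
    intro m M h c
    by_contra hc
    push_neg at hc
    refine h (Finset.prod_eq_zero (Finset.mem_univ c) ?_)
    rw [stirlingSecond_eq_zero_of_lt hc]
    simp
  have hsuppF : Function.support F ⊆ ↑Box := by
    intro m hm
    rw [Function.mem_support, hF' m] at hm
    obtain ⟨M, hMBox, hne⟩ := Finset.exists_ne_zero_of_sum_ne_zero hm
    have hA0 : A m M ≠ 0 := fun h => hne (by rw [h, zero_smul])
    rw [Finset.mem_coe, hBoxdef, Fintype.mem_piFinset]
    intro c
    rw [Finset.mem_range, Nat.lt_succ_iff]
    exact le_trans (hAne hA0 c) (hBoxle hMBox c)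
  refine ⟨Box.finite_toSet.subset hsuppF, ?_⟩
  intro m
  rw [finsum_eq_sum_of_support_subset _
    (s := Box)
    (fun M hM => hsuppF (Function.mem_support.2
      (fun h0 => Function.mem_support.1 hM (by rw [h0, smul_zero]))))]
  have hexp : ∀ M : α → ℕ,
      ((-1 : ℚ) ^ ((∑ c : α, (M c : ℤ)) - ∑ c : α, (m c : ℤ)) *
        ∏ c : α, ((m c).factorial : ℚ) / ((M c).factorial : ℚ) *
          (stirlingFirst (M c) (m c) : ℚ)) • F M
      = ∑ N ∈ Box, ((-1 : ℚ) ^ ((∑ c : α, (M c : ℤ)) - ∑ c : α, (m c : ℤ)) *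
          (∏ c : α, ((m c).factorial : ℚ) / ((M c).factorial : ℚ) *
            (stirlingFirst (M c) (m c) : ℚ)) * A M N) • B N := by
    intro M
    rw [hF' M, Finset.smul_sum]
    exact Finset.sum_congr rfl fun N _ => by rw [smul_smul]
  rw [Finset.sum_congr rfl fun M _ => hexp M, Finset.sum_comm]
  have hkey : ∀ N ∈ Box,
      ∑ M ∈ Box, ((-1 : ℚ) ^ ((∑ c : α, (M c : ℤ)) - ∑ c : α, (m c : ℤ)) *
          (∏ c : α, ((m c).factorial : ℚ) / ((M c).factorial : ℚ) *
            (stirlingFirst (M c) (m c) : ℚ)) * A M N)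
        = if m = N then 1 else 0 := by
    intro N hN
    have hterm : ∀ M : α → ℕ,
        (-1 : ℚ) ^ ((∑ c : α, (M c : ℤ)) - ∑ c : α, (m c : ℤ)) *
          (∏ c : α, ((m c).factorial : ℚ) / ((M c).factorial : ℚ) *
            (stirlingFirst (M c) (m c) : ℚ)) * A M N
        = ∏ c : α, ((-1 : ℚ) ^ (M c) * (-1 : ℚ) ^ (m c) *
            (((m c).factorial : ℚ) / ((M c).factorial : ℚ) * (stirlingFirst (M c) (m c) : ℚ))) *
            (((M c).factorial : ℚ) / ((N c).factorial : ℚ) * (stirlingSecond (N c) (M c) : ℚ)) := by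
      intro M
      have h1 : (∑ c : α, (M c : ℤ)) = ((∑ c : α, M c : ℕ) : ℤ) := by push_cast; ring
      have h2 : (∑ c : α, (m c : ℤ)) = ((∑ c : α, m c : ℕ) : ℤ) := by push_cast; ring
      rw [h1, h2, neg_one_zpow_sub, ← Finset.prod_pow_eq_pow_sum, ← Finset.prod_pow_eq_pow_sum,
        hAdef]
      rw [← Finset.prod_mul_distrib, ← Finset.prod_mul_distrib, ← Finset.prod_mul_distrib]
    have hps := Finset.prod_univ_sum (fun c : α => Finset.range (b c + 1))
      (fun (c : α) (k : ℕ) =>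
        ((-1 : ℚ) ^ k * (-1 : ℚ) ^ (m c) *
          (((m c).factorial : ℚ) / (k.factorial : ℚ) * (stirlingFirst k (m c) : ℚ))) *
          ((k.factorial : ℚ) / ((N c).factorial : ℚ) * (stirlingSecond (N c) k : ℚ)))
    rw [Finset.sum_congr rfl fun M _ => hterm M, hBoxdef, ← hps]
    rw [Finset.prod_congr rfl fun c _ => coordSum (m c) (N c) (b c) (hBoxle hN c)]
    by_cases h : m = N
    · subst h; simp
    · rw [if_neg h]
      obtain ⟨c, hc⟩ : ∃ c, N c ≠ m c := by
        by_contra hall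
        push_neg at hall
        exact h (funext fun c => (hall c).symm)
      exact Finset.prod_eq_zero (Finset.mem_univ c) (if_neg hc)
  rw [Finset.sum_congr rfl fun N hN => by rw [← Finset.sum_smul, hkey N hN]]
  simp only [ite_smul, one_smul, zero_smul]
  rw [Finset.sum_ite_eq]
  by_cases hm : m ∈ Box
  · rw [if_pos hm]
  · rw [if_neg hm]
    by_contra h
    exact hm (hmemBox h)
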